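/- Let T be a bounded totally paranormal operator and μ a nonzero isolated point of σ(T). Then ker(T − μI) = ker(T* − μ̄I), and the Riesz projection E_μ is self-adjoint (an orthogonal projection). -/

import Mathlib

set_option maxHeartbeats 1000000

open Metric Complex ContinuousLinearMap

section Stmt13Aux

variable {H : Type*} [NormedAddCommGroup H] [InnerProductSpace ℂ H]

theorem norm_sq_expand (a b c d : ℝ) (u v w t : H) :
    ‖a • u + b • v + c • w + d • t‖ ^ 2 =
      a^2 * ‖u‖^2 + b^2 * ‖v‖^2 + c^2 * ‖w‖^2 + d^2 * ‖t‖^2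
      + 2*a*b*((@inner ℂ H _ u v).re) + 2*a*c*((@inner ℂ H _ u w).re)
      + 2*a*d*((@inner ℂ H _ u t).re)
      + 2*b*c*((@inner ℂ H _ v w).re) + 2*b*d*((@inner ℂ H _ v t).re)
      + 2*c*d*((@inner ℂ H _ w t).re) := by
  letI : InnerProductSpace ℝ H := InnerProductSpace.complexToReal
  have hre : ∀ p q : H, (@inner ℂ H _ p q).re = @inner ℝ H _ p q := fun _ _ => rfl
  simp only [hre]
  rw [← real_inner_self_eq_norm_sq, ← real_inner_self_eq_norm_sq u,
    ← real_inner_self_eq_norm_sq v, ← real_inner_self_eq_norm_sq w,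
    ← real_inner_self_eq_norm_sq t]
  simp only [inner_add_left, inner_add_right, real_inner_smul_left, real_inner_smul_right]
  rw [real_inner_comm v u, real_inner_comm w u, real_inner_comm t u, real_inner_comm w v,
    real_inner_comm t v, real_inner_comm t w]
  ring

theorem lemC (S : H →L[ℂ] H)
    (hp : ∀ (ν : ℂ) (z : H), ‖(S + ν • 1) z‖ ^ 2 ≤ ‖(S + ν • 1) ((S + ν • 1) z)‖ * ‖z‖)
    (x y : H) (hx : S x = 0) (hxy : @inner ℂ H _ x y = 0) :
    @inner ℂ H _ x (S (S y)) = 0 := by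
  by_contra hne
  rcases eq_or_ne x 0 with rfl | hx0
  · exact hne (inner_zero_left _)
  set η : ℂ := @inner ℂ H _ x (S (S y)) with hη
  set s : ℂ := -(starRingEnd ℂ) η with hs
  set y' : H := s • y with hy'
  set g' : H := s • (S y) with hg'
  set h' : H := s • (S (S y)) with hh'
  have hSy' : S y' = g' := by rw [hy', map_smul]
  have hSg' : S g' = h' := by rw [hg', map_smul]
  set P : ℝ := ‖x‖^2 with hPdef
  set Py : ℝ := ‖y'‖^2
  set Pg : ℝ := ‖g'‖^2
  set Ph : ℝ := ‖h'‖^2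
  set pxg : ℝ := (@inner ℂ H _ x g').re with hpxgdef
  set pxh : ℝ := (@inner ℂ H _ x h').re with hpxhdef
  set pyg : ℝ := (@inner ℂ H _ y' g').re with hpygdef
  set pyh : ℝ := (@inner ℂ H _ y' h').re with hpyhdef
  set pgh : ℝ := (@inner ℂ H _ g' h').re with hpghdef
  have hP : 0 < P := pow_pos (norm_pos_iff.mpr hx0) 2
  have hpxy : (@inner ℂ H _ x y').re = 0 := by
    rw [hy', inner_smul_right, hxy, mul_zero]; simp
  have hpxh : pxh = - Complex.normSq η := by
    rw [hpxhdef, hh', inner_smul_right, ← hη, hs]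
    rw [neg_mul, ← Complex.normSq_eq_conj_mul_self]
    simp
  -- the three norm expansions
  have e1 : ∀ R : ℝ, ‖R • x + y'‖^2 = P*R^2 + Py := by
    intro R
    have h0 : R • x + y' = R • x + (1:ℝ) • y' + (0:ℝ) • (0:H) + (0:ℝ) • (0:H) := by
      simp
    rw [h0, norm_sq_expand]
    simp [hpxy]
    ring
  have e2 : ∀ R : ℝ, ‖(R^2) • x + R • y' + g'‖^2
      = P*R^4 + (Py+2*pxg)*R^2 + (2*pyg)*R + Pg := by
    intro R
    have h0 : (R^2) • x + R • y' + g' = (R^2) • x + R • y' + (1:ℝ) • g' + (0:ℝ) • (0:H) := by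
      simp
    rw [h0, norm_sq_expand]
    simp [hpxy]
    ring
  have e3 : ∀ R : ℝ, ‖(R^3) • x + (R^2) • y' + (2*R) • g' + h'‖^2
      = P*R^6 + (Py+4*pxg)*R^4 + (2*pxh+4*pyg)*R^3 + (4*Pg+2*pyh)*R^2 + (4*pgh)*R + Ph := by
    intro R
    have h0 : (R^3) • x + (R^2) • y' + (2*R) • g' + h'
        = (R^3) • x + (R^2) • y' + (2*R) • g' + (1:ℝ) • h' := by simp
    rw [h0, norm_sq_expand]
    simp [hpxy]
    ring
  -- vector identities
  have v1 : ∀ R : ℝ, (S + (R:ℂ) • 1) (R • x + y') = (R^2) • x + R • y' + g' := by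
    intro R
    have : S (R • x + y') = g' := by
      rw [map_add, map_smul_of_tower, hx, smul_zero, hSy', zero_add]
    simp only [add_apply, smul_apply, one_apply, ContinuousLinearMap.one_apply, this]
    rw [Complex.coe_smul]
    rw [smul_add, smul_smul]
    module
  have v2 : ∀ R : ℝ, (S + (R:ℂ) • 1) ((R^2) • x + R • y' + g')
      = (R^3) • x + (R^2) • y' + (2*R) • g' + h' := by
    intro R
    have hS : S ((R^2) • x + R • y' + g') = R • g' + h' := by
      rw [map_add, map_add, map_smul_of_tower, map_smul_of_tower, hx, smul_zero, hSy', hSg']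
      rw [zero_add]
    simp only [add_apply, smul_apply, one_apply, ContinuousLinearMap.one_apply, hS]
    rw [Complex.coe_smul]
    rw [smul_add, smul_add, smul_smul, smul_smul]
    module
  -- main inequality per R
  have key : ∀ R : ℝ,
      (P*R^4 + (Py+2*pxg)*R^2 + (2*pyg)*R + Pg)^2 ≤
      (P*R^6 + (Py+4*pxg)*R^4 + (2*pxh+4*pyg)*R^3 + (4*Pg+2*pyh)*R^2 + (4*pgh)*R + Ph)
        * (P*R^2 + Py) := by
    intro R
    have h1 := hp ((R:ℂ)) (R • x + y')
    rw [v1 R] at h1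
    rw [v2 R] at h1
    have h2 : (‖(R^2) • x + R • y' + g'‖^2)^2 ≤
        (‖(R^3) • x + (R^2) • y' + (2*R) • g' + h'‖ * ‖R • x + y'‖)^2 := by
      have := norm_nonneg ((R^2) • x + R • y' + g')
      nlinarith [h1, norm_nonneg ((R^3) • x + (R^2) • y' + (2*R) • g' + h'),
        norm_nonneg (R • x + y')]
    rw [mul_pow] at h2
    rw [e1 R, e2 R, e3 R] at h2
    exact h2
  -- contradiction
  obtain ⟨c4, hc4⟩ : ∃ c:ℝ, c = (4*Pg+2*pyh)*P + (Py+4*pxg)*Py - (2*P*Pg + (Py+2*pxg)^2) := ⟨_, rfl⟩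
  obtain ⟨c3, hc3⟩ : ∃ c:ℝ, c = (4*pgh)*P + (2*pxh+4*pyg)*Py - 2*(Py+2*pxg)*(2*pyg) := ⟨_, rfl⟩
  obtain ⟨c2, hc2⟩ : ∃ c:ℝ, c = Ph*P + (4*Pg+2*pyh)*Py - (2*(Py+2*pxg)*Pg + (2*pyg)^2) := ⟨_, rfl⟩
  obtain ⟨c1, hc1⟩ : ∃ c:ℝ, c = (4*pgh)*Py - 2*(2*pyg)*Pg := ⟨_, rfl⟩
  obtain ⟨c0, hc0⟩ : ∃ c:ℝ, c = Ph*Py - Pg^2 := ⟨_, rfl⟩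
  have iden : ∀ R : ℝ,
      (P*R^6 + (Py+4*pxg)*R^4 + (2*pxh+4*pyg)*R^3 + (4*Pg+2*pyh)*R^2 + (4*pgh)*R + Ph)
        * (P*R^2 + Py)
      - (P*R^4 + (Py+2*pxg)*R^2 + (2*pyg)*R + Pg)^2
      = (2*P*pxh)*R^5 + c4*R^4 + c3*R^3 + c2*R^2 + c1*R + c0 := by
    intro R; rw [hc4, hc3, hc2, hc1, hc0]; ring
  obtain ⟨L, hL⟩ : ∃ l:ℝ, l = 2*P*Complex.normSq η := ⟨_, rfl⟩
  have hLpos : 0 < L := by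
    rw [hL]
    have := Complex.normSq_pos.mpr hne
    positivity
  obtain ⟨Cs, hCs⟩ : ∃ c:ℝ, c = |c4|+|c3|+|c2|+|c1|+|c0| := ⟨_, rfl⟩
  have hCs0 : 0 ≤ Cs := by rw [hCs]; positivity
  obtain ⟨R0, hR0⟩ : ∃ c:ℝ, c = (Cs + L)/L + 1 := ⟨_, rfl⟩
  have hR01 : 1 ≤ R0 := by
    rw [hR0]
    have : 0 ≤ (Cs + L)/L := by positivity
    linarith
  have hR0pos : 0 < R0 := lt_of_lt_of_le one_pos hR01
  have hLR0 : Cs + L ≤ L * R0 := by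
    rw [hR0, mul_add, mul_one, mul_div_cancel₀ _ (ne_of_gt hLpos)]
    linarith

  have htail : c4*R0^4 + c3*R0^3 + c2*R0^2 + c1*R0 + c0 ≤ Cs * R0^4 := by
    have p1 : R0^1 ≤ R0^4 := pow_le_pow_right₀ hR01 (by norm_num)
    have p2 : R0^2 ≤ R0^4 := pow_le_pow_right₀ hR01 (by norm_num)
    have p3 : R0^3 ≤ R0^4 := pow_le_pow_right₀ hR01 (by norm_num)
    have p0 : (1:ℝ) ≤ R0^4 := by
      have := pow_le_pow_right₀ hR01 (show 0 ≤ 4 by norm_num)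
      simpa using this
    have b4 : c4*R0^4 ≤ |c4| * R0^4 :=
      mul_le_mul_of_nonneg_right (le_abs_self c4) (by positivity)
    have b3 : c3*R0^3 ≤ |c3| * R0^4 := by
      have h1 : c3*R0^3 ≤ |c3| * R0^3 :=
        mul_le_mul_of_nonneg_right (le_abs_self c3) (by positivity)
      have h2 : |c3| * R0^3 ≤ |c3| * R0^4 := mul_le_mul_of_nonneg_left p3 (abs_nonneg _)
      linarith
    have b2 : c2*R0^2 ≤ |c2| * R0^4 := by
      have h1 : c2*R0^2 ≤ |c2| * R0^2 :=
        mul_le_mul_of_nonneg_right (le_abs_self c2) (by positivity)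
      have h2 : |c2| * R0^2 ≤ |c2| * R0^4 := mul_le_mul_of_nonneg_left p2 (abs_nonneg _)
      linarith
    have b1 : c1*R0 ≤ |c1| * R0^4 := by
      have : c1*R0^1 ≤ |c1| * R0^1 :=
        mul_le_mul_of_nonneg_right (le_abs_self c1) (by positivity)
      have h2 : |c1| * R0^1 ≤ |c1| * R0^4 := mul_le_mul_of_nonneg_left p1 (abs_nonneg _)
      calc c1*R0 = c1*R0^1 := by ring
        _ ≤ |c1| * R0^1 := this
        _ ≤ |c1| * R0^4 := h2
    have b0 : c0 ≤ |c0| * R0^4 := by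
      have h1 : c0 ≤ |c0| := le_abs_self _
      have h2 : |c0| = |c0| * 1 := by ring
      have h3 : |c0| * 1 ≤ |c0| * R0^4 := mul_le_mul_of_nonneg_left p0 (abs_nonneg _)
      linarith
    have hCsA : Cs * R0^4 = |c4| * R0^4 + |c3| * R0^4 + |c2| * R0^4 + |c1| * R0^4 + |c0| * R0^4 := by
      rw [hCs]; ring
    linarith
  -- final contradiction
  have hD0 : 0 ≤ 2*P*pxh*R0^5 + c4*R0^4 + c3*R0^3 + c2*R0^2 + c1*R0 + c0 := by
    have h := sub_nonneg.mpr (key R0)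
    rw [iden R0] at h
    exact h
  have h5 : 2*P*pxh*R0^5 = -((L*R0)*R0^4) := by rw [hpxh, hL]; ring
  have hD1 : (L*R0)*R0^4 ≤ c4*R0^4 + c3*R0^3 + c2*R0^2 + c1*R0 + c0 := by linarith
  have hdist : Cs*R0^4 + L*R0^4 ≤ (L*R0)*R0^4 := by
    have := mul_le_mul_of_nonneg_right hLR0 (show (0:ℝ) ≤ R0^4 by positivity)
    calc Cs*R0^4 + L*R0^4 = (Cs+L)*R0^4 := by ring
      _ ≤ (L*R0)*R0^4 := this
  have hLA : 0 < L*R0^4 := mul_pos hLpos (by positivity)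
  linarith

end Stmt13Aux

section Stmt13Aux2

theorem comp_circleIntegral {A B : Type*} [NormedAddCommGroup A] [NormedSpace ℂ A]
    [CompleteSpace A] [NormedAddCommGroup B] [NormedSpace ℂ B] [CompleteSpace B]
    (Φ : A →L[ℂ] B) {g : ℂ → A} {c : ℂ} {ρ : ℝ} (hg : CircleIntegrable g c ρ) :
    Φ (∮ z in C(c, ρ), g z) = ∮ z in C(c, ρ), Φ (g z) := by
  have hg' : IntervalIntegrable
      (fun θ : ℝ => deriv (circleMap c ρ) θ • g (circleMap c ρ θ))
      MeasureTheory.volume 0 (2 * Real.pi) := hg.out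
  simp only [circleIntegral]
  rw [← ContinuousLinearMap.intervalIntegral_comp_comm Φ hg']
  congr 1
  ext θ
  rw [Φ.map_smul]

variable {H : Type*} [NormedAddCommGroup H] [InnerProductSpace ℂ H] [CompleteSpace H]

theorem riesz_facts (T : H →L[ℂ] H) (μ : ℂ) (r : ℝ) (hr : 0 < r)
    (hsp : ∀ z, z ∈ closedBall μ r → z ∈ spectrum ℂ T → z = μ)
    (hpara : ∀ v : H, ‖(T - μ • 1) v‖ ^ 2 ≤ ‖(T - μ • 1) ((T - μ • 1) v)‖ * ‖v‖)
    (E : H →L[ℂ] H)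
    (hE : E = ((2 * Real.pi * Complex.I)⁻¹ : ℂ) •
      (∮ z in C(μ, r), Ring.inverse (z • (1 : H →L[ℂ] H) - T))) :
    (T - μ • 1) * E = 0 ∧ ∃ Q : H →L[ℂ] H, 1 - E = (T - μ • 1) * Q := by
  set S : H →L[ℂ] H := T - μ • 1 with hS
  set f : ℂ → (H →L[ℂ] H) := fun z => Ring.inverse (z • (1 : H →L[ℂ] H) - T) with hf
  set c : ℂ := ((2 * Real.pi * Complex.I)⁻¹ : ℂ) with hc
  -- units off the spectrum
  have h_unit : ∀ z : ℂ, z ∉ spectrum ℂ T → IsUnit (z • (1 : H →L[ℂ] H) - T) := by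
    intro z hz
    have := spectrum.notMem_iff.mp hz
    rwa [Algebra.algebraMap_eq_smul_one] at this
  have hsphere : ∀ ρ : ℝ, 0 < ρ → ρ ≤ r → ∀ z ∈ sphere μ ρ, z ∉ spectrum ℂ T := by
    intro ρ h0 hle z hzs hmem
    have hd : dist z μ = ρ := mem_sphere.mp hzs
    have hzb : z ∈ closedBall μ r := by
      rw [mem_closedBall, hd]; exact hle
    have := hsp z hzb hmem
    rw [this] at hd
    simp at hd
    exact absurd hd.symm (ne_of_gt h0)
  have hdiff : ∀ z : ℂ, z ∉ spectrum ℂ T → DifferentiableAt ℂ f z := by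
    intro z hz
    have h1 : DifferentiableAt ℂ (fun w : ℂ => w • (1 : H →L[ℂ] H) - T) z :=
      (differentiableAt_id.smul_const (1 : H →L[ℂ] H)).sub_const T
    obtain ⟨u, hu⟩ := h_unit z hz
    have h2 : DifferentiableAt ℂ Ring.inverse (z • (1 : H →L[ℂ] H) - T) := by
      rw [← hu]; exact (hasFDerivAt_ringInverse u).differentiableAt
    exact h2.comp z h1
  have hcont : ∀ s : Set ℂ, (∀ z ∈ s, z ∉ spectrum ℂ T) → ContinuousOn f s := by
    intro s hs z hz
    exact ((hdiff z (hs z hz)).continuousAt).continuousWithinAt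
  have hannset : ∀ ρ : ℝ, 0 < ρ → ∀ z ∈ closedBall μ r \ ball μ ρ, z ∉ spectrum ℂ T := by
    intro ρ h0 z hz hmem
    have h1 := hsp z hz.1 hmem
    have h2 : ρ ≤ dist z μ := by
      by_contra hlt
      exact hz.2 (mem_ball.mpr (lt_of_not_ge hlt))
    rw [h1] at h2
    simp at h2
    exact absurd h2 (not_le.mpr h0)
  -- integrability of the basic integrands
  have gint : ∀ (n : ℕ) (ρ : ℝ), 0 < ρ → ρ ≤ r →
      CircleIntegrable (fun z => (z - μ) ^ n • f z) μ ρ := by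
    intro n ρ h0 hle
    apply ContinuousOn.circleIntegrable h0.le
    exact (((continuous_id.sub continuous_const).pow n).continuousOn).smul
      (hcont _ (hsphere ρ h0 hle))
  -- pointwise identities for z off the spectrum
  have hSf : ∀ z : ℂ, z ∉ spectrum ℂ T →
      S * f z = (z - μ) • f z - 1 := by
    intro z hz
    have hu := h_unit z hz
    have h1 : (z • (1 : H →L[ℂ] H) - T) * f z = 1 := Ring.mul_inverse_cancel _ hu
    have h2 : S = (z - μ) • (1 : H →L[ℂ] H) - (z • (1 : H →L[ℂ] H) - T) := by
      rw [hS, sub_smul]; abel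
    rw [h2, sub_mul, smul_mul_assoc, one_mul, h1]
  have hMf : ∀ z : ℂ, z ∉ spectrum ℂ T →
      (μ • (1 : H →L[ℂ] H) - T) * f z = 1 - (z - μ) • f z := by
    intro z hz
    have hu := h_unit z hz
    have h1 : (z • (1 : H →L[ℂ] H) - T) * f z = 1 := Ring.mul_inverse_cancel _ hu
    have h2 : μ • (1 : H →L[ℂ] H) - T
        = (z • (1 : H →L[ℂ] H) - T) - (z - μ) • (1 : H →L[ℂ] H) := by
      rw [sub_smul]; abel
    rw [h2, sub_mul, smul_mul_assoc, one_mul, h1]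
  -- power formula at radius r
  have key_pow : ∀ n : ℕ, S ^ n * E = c • ∮ z in C(μ, r), (z - μ) ^ n • f z := by
    intro n
    induction n with
    | zero =>
        rw [pow_zero, one_mul, hE]
        congr 1
        refine circleIntegral.integral_congr hr.le fun z hz => ?_
        simp [hf]
    | succ n ih =>
        have hstep : S ^ (n + 1) * E = S * (S ^ n * E) := by
          rw [pow_succ', mul_assoc]
        rw [hstep, ih]
        have hmulint :
            (ContinuousLinearMap.mul ℂ (H →L[ℂ] H) S) (∮ z in C(μ, r), (z - μ) ^ n • f z)
            = ∮ z in C(μ, r), S * ((z - μ) ^ n • f z) := by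
          exact comp_circleIntegral (ContinuousLinearMap.mul ℂ (H →L[ℂ] H) S)
            (gint n r hr le_rfl)
        have hmul : S * (c • ∮ z in C(μ, r), (z - μ) ^ n • f z)
            = c • ∮ z in C(μ, r), S * ((z - μ) ^ n • f z) := by
          rw [mul_smul_comm, ← hmulint]
          rfl
        rw [hmul]
        congr 1
        have heq : Set.EqOn (fun z => S * ((z - μ) ^ n • f z))
            (fun z => (z - μ) ^ (n + 1) • f z - (z - μ) ^ n • (1 : H →L[ℂ] H))
            (sphere μ r) := by
          intro z hz
          have hzs := hsphere r hr le_rfl z hz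
          simp only
          rw [mul_smul_comm, hSf z hzs, smul_sub, smul_smul, ← pow_succ]
        rw [circleIntegral.integral_congr hr.le heq]
        have hint1 : CircleIntegrable (fun z => (z - μ) ^ (n + 1) • f z) μ r :=
          gint (n + 1) r hr le_rfl
        have hint2 : CircleIntegrable (fun z => (z - μ) ^ n • (1 : H →L[ℂ] H)) μ r := by
          apply ContinuousOn.circleIntegrable hr.le
          exact (((continuous_id.sub continuous_const).pow n).continuousOn).smul
            continuousOn_const
        rw [circleIntegral.integral_sub hint1 hint2]
        have hzero : (∮ z in C(μ, r), (z - μ) ^ n • (1 : H →L[ℂ] H)) = 0 := by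
          rw [circleIntegral.integral_smul_const]
          have : (∮ z in C(μ, r), (z - μ) ^ n) = 0 := by
            have h := circleIntegral.integral_sub_zpow_of_ne
              (show (n : ℤ) ≠ -1 by omega) μ μ r
            have h2 : Set.EqOn (fun z : ℂ => (z - μ) ^ (n : ℤ)) (fun z : ℂ => (z - μ) ^ n)
                (sphere μ r) := fun z _ => zpow_natCast _ n
            rw [← circleIntegral.integral_congr hr.le h2, h]
          rw [this, zero_smul]
        rw [hzero, sub_zero]
  -- change of radius
  have hann : ∀ (n : ℕ) (ρ : ℝ), 0 < ρ → ρ ≤ r →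
      (∮ z in C(μ, r), (z - μ) ^ n • f z) = ∮ z in C(μ, ρ), (z - μ) ^ n • f z := by
    intro n ρ h0 hle
    refine circleIntegral_eq_of_differentiable_on_annulus_off_countable h0 hle
      Set.countable_empty ?_ ?_
    · exact (((continuous_id.sub continuous_const).pow n).continuousOn).smul
        (hcont _ (hannset ρ h0))
    · intro z hz
      have hz1 : z ∈ closedBall μ r \ ball μ ρ :=
        ⟨ball_subset_closedBall hz.1.1, fun hb => hz.1.2 (ball_subset_closedBall hb)⟩
      have hzs : z ∉ spectrum ℂ T := hannset ρ h0 z hz1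
      exact (((differentiableAt_id.sub_const μ).pow n)).smul (hdiff z hzs)
  -- norm bound
  have hbound : ∀ ρ : ℝ, 0 < ρ → ρ ≤ r → ∃ M : ℝ, 0 ≤ M ∧
      ∀ n : ℕ, ‖S ^ n * E‖ ≤ ρ ^ (n + 1) * M := by
    intro ρ h0 hle
    obtain ⟨C, hC⟩ := (isCompact_sphere μ ρ).exists_bound_of_continuousOn
      (hcont _ (hsphere ρ h0 hle))
    refine ⟨max C 0, le_max_right _ _, fun n => ?_⟩
    rw [key_pow n, hann n ρ h0 hle]
    have hnorm1 : ∀ z ∈ sphere μ ρ, ‖(z - μ) ^ n • f z‖ ≤ ρ ^ n * max C 0 := by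
      intro z hz
      rw [norm_smul, norm_pow]
      have hd : ‖z - μ‖ = ρ := by
        rw [← dist_eq_norm]; exact mem_sphere.mp hz
      rw [hd]
      exact mul_le_mul_of_nonneg_left (le_trans (hC z hz) (le_max_left _ _))
        (by positivity)
    have h2 := circleIntegral.norm_integral_le_of_norm_le_const h0.le hnorm1
    rw [norm_smul]
    have hcnorm : ‖c‖ = (2 * Real.pi)⁻¹ := by
      rw [hc, norm_inv]
      simp [norm_mul, Complex.norm_real, Real.pi_nonneg, abs_of_nonneg]
    rw [hcnorm]
    calc (2 * Real.pi)⁻¹ * ‖∮ z in C(μ, ρ), (z - μ) ^ n • f z‖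
        ≤ (2 * Real.pi)⁻¹ * (2 * Real.pi * ρ * (ρ ^ n * max C 0)) := by
          apply mul_le_mul_of_nonneg_left h2
          positivity
      _ = ρ ^ (n + 1) * max C 0 := by
          field_simp
          ring
  -- S * E = 0
  have hSE : S * E = 0 := by
    ext x
    rw [ContinuousLinearMap.zero_apply, ContinuousLinearMap.mul_apply]
    rw [← norm_eq_zero]
    set a : ℕ → ℝ := fun n => ‖(S ^ n) (E x)‖ with ha
    have ha_nonneg : ∀ n, 0 ≤ a n := fun n => norm_nonneg _
    have hrec : ∀ n : ℕ, (S ^ (n + 1)) (E x) = S ((S ^ n) (E x)) := by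
      intro n
      rw [pow_succ', ContinuousLinearMap.mul_apply]
    suffices hfin : a 1 = 0 by
      rw [ha] at hfin
      simpa [pow_one] using hfin
    have lras : ∀ n : ℕ, a (n + 1) ^ 2 ≤ a (n + 2) * a n := by
      intro n
      have := hpara ((S ^ n) (E x))
      rw [← hrec n] at this
      have h2 : S ((S ^ (n + 1)) (E x)) = (S ^ (n + 2)) (E x) := (hrec (n + 1)).symm
      rw [h2] at this
      exact this
    have step1 : ∀ n : ℕ, a 1 * a (n + 1) ≤ a 0 * a (n + 2) := by
      intro n
      induction n with
      | zero =>
          have := lras 0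
          nlinarith [ha_nonneg 0, ha_nonneg 1, ha_nonneg 2]
      | succ n ih =>
          rcases eq_or_lt_of_le (ha_nonneg (n + 2)) with h | h
          · rw [← h, mul_zero]
            exact mul_nonneg (ha_nonneg 0) (ha_nonneg (n + 3))
          · have h1 := lras (n + 1)
            nlinarith [ha_nonneg 1, ha_nonneg 0, ha_nonneg (n + 1), ha_nonneg (n + 3)]
    have step2 : ∀ n : ℕ, (a 1) ^ (n + 1) ≤ (a 0) ^ n * a (n + 1) := by
      intro n
      induction n with
      | zero => simp
      | succ n ih =>
          have h1 : (a 1) ^ (n + 2) = (a 1) ^ (n + 1) * a 1 := by ring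
          have h2 : (a 1) ^ (n + 1) * a 1 ≤ ((a 0) ^ n * a (n + 1)) * a 1 :=
            mul_le_mul_of_nonneg_right ih (ha_nonneg 1)
          have h3 : ((a 0) ^ n * a (n + 1)) * a 1 = (a 0) ^ n * (a 1 * a (n + 1)) := by ring
          have h4 : (a 0) ^ n * (a 1 * a (n + 1)) ≤ (a 0) ^ n * (a 0 * a (n + 2)) :=
            mul_le_mul_of_nonneg_left (step1 n) (pow_nonneg (ha_nonneg 0) n)
          have h5 : (a 0) ^ n * (a 0 * a (n + 2)) = (a 0) ^ (n + 1) * a (n + 2) := by ring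
          linarith
    -- small radius estimate
    have hsmall : ∀ ρ : ℝ, 0 < ρ → ρ ≤ r → a 1 ≤ a 0 * ρ := by
      intro ρ h0 hle
      obtain ⟨M, hM0, hM⟩ := hbound ρ h0 hle
      have hup : ∀ n : ℕ, a n ≤ ρ ^ (n + 1) * M * ‖x‖ := by
        intro n
        have h1 : (S ^ n) (E x) = (S ^ n * E) x := rfl
        rw [ha]
        simp only [h1]
        calc ‖(S ^ n * E) x‖ ≤ ‖S ^ n * E‖ * ‖x‖ := ContinuousLinearMap.le_opNorm _ _
          _ ≤ ρ ^ (n + 1) * M * ‖x‖ :=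
              mul_le_mul_of_nonneg_right (hM n) (norm_nonneg x)
      rcases eq_or_lt_of_le (ha_nonneg 0) with h00 | h00
      · -- a 0 = 0
        have h1 := lras 0
        rw [← h00, mul_zero] at h1
        have h2 : a 1 = 0 := by nlinarith [ha_nonneg 1]
        rw [h2, ← h00, zero_mul]
      · by_contra hcon
        push_neg at hcon
        set t : ℝ := a 0 * ρ with ht
        set K : ℝ := ρ * M * ‖x‖ / a 0 with hK
        have ht0 : 0 < t := mul_pos h00 h0
        have hq1 : 1 < a 1 / t := (one_lt_div ht0).mpr hcon
        obtain ⟨n, hn⟩ := pow_unbounded_of_one_lt K hq1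
        have hup2 : (a 1) ^ (n + 1) ≤ t ^ (n + 1) * K := by
          have h1 := step2 n
          have h2 := hup (n + 1)
          have h3 : (a 0) ^ n * a (n + 1) ≤ (a 0) ^ n * (ρ ^ (n + 2) * M * ‖x‖) :=
            mul_le_mul_of_nonneg_left h2 (pow_nonneg (ha_nonneg 0) n)
          have h4 : (a 0) ^ n * (ρ ^ (n + 2) * M * ‖x‖) = t ^ (n + 1) * K := by
            rw [ht, hK, mul_pow]
            field_simp
            ring
          linarith
        have hdiv : (a 1 / t) ^ (n + 1) ≤ K := by
          rw [div_pow, div_le_iff₀ (by positivity)]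
          calc (a 1) ^ (n + 1) ≤ t ^ (n + 1) * K := hup2
            _ = K * t ^ (n + 1) := by ring
        have hmono : (a 1 / t) ^ n ≤ (a 1 / t) ^ (n + 1) :=
          pow_le_pow_right₀ (le_of_lt hq1) (by omega)
        linarith
    -- conclude a 1 = 0
    have hle0 : a 1 ≤ 0 := by
      by_contra hpos
      push_neg at hpos
      set ρ : ℝ := min r (a 1 / (2 * (a 0 + 1))) with hρ
      have hρ0 : 0 < ρ := by
        apply lt_min hr
        positivity
      have hρle : ρ ≤ r := min_le_left _ _
      have h1 := hsmall ρ hρ0 hρle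
      have h2 : ρ ≤ a 1 / (2 * (a 0 + 1)) := min_le_right _ _
      have h3 : a 0 * ρ ≤ a 0 * (a 1 / (2 * (a 0 + 1))) :=
        mul_le_mul_of_nonneg_left h2 (ha_nonneg 0)
      have hc2 : (0:ℝ) < 2 * (a 0 + 1) := by positivity
      have h4 : a 0 * (a 1 / (2 * (a 0 + 1))) < a 1 := by
        rw [← mul_div_assoc, div_lt_iff₀ hc2]
        nlinarith [ha_nonneg 0]
      linarith
    exact le_antisymm hle0 (ha_nonneg 1)
  refine ⟨hSE, ?_⟩
  -- construct the quasi-inverse witness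
  have hfc : CircleIntegrable f μ r :=
    ContinuousOn.circleIntegrable hr.le (hcont _ (hsphere r hr le_rfl))
  have hzne : ∀ z ∈ sphere μ r, z - μ ≠ 0 := by
    intro z hz
    have : dist z μ = r := mem_sphere.mp hz
    intro h0
    rw [sub_eq_zero] at h0
    rw [h0] at this
    simp at this
    exact absurd this.symm (ne_of_gt hr)
  have hinvcont : ContinuousOn (fun z : ℂ => (z - μ)⁻¹) (sphere μ r) :=
    ((continuous_id.sub continuous_const).continuousOn).inv₀ hzne
  have hgint : CircleIntegrable (fun z : ℂ => (z - μ)⁻¹ • f z) μ r :=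
    ContinuousOn.circleIntegrable hr.le
      (hinvcont.smul (hcont _ (hsphere r hr le_rfl)))
  have hmix : (μ • (1 : H →L[ℂ] H) - T) * (∮ z in C(μ, r), (z - μ)⁻¹ • f z)
      = ∮ z in C(μ, r), (μ • (1 : H →L[ℂ] H) - T) * ((z - μ)⁻¹ • f z) := by
    have h := comp_circleIntegral
      (ContinuousLinearMap.mul ℂ (H →L[ℂ] H) (μ • (1 : H →L[ℂ] H) - T)) hgint
    simp only [ContinuousLinearMap.mul_apply'] at h
    exact h
  have heq2 : Set.EqOn (fun z => (μ • (1 : H →L[ℂ] H) - T) * ((z - μ)⁻¹ • f z))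
      (fun z => (z - μ)⁻¹ • (1 : H →L[ℂ] H) - f z) (sphere μ r) := by
    intro z hz
    have hzs := hsphere r hr le_rfl z hz
    simp only
    rw [mul_smul_comm, hMf z hzs, smul_sub, smul_smul, inv_mul_cancel₀ (hzne z hz), one_smul]
  have hint1 : CircleIntegrable (fun z : ℂ => (z - μ)⁻¹ • (1 : H →L[ℂ] H)) μ r :=
    ContinuousOn.circleIntegrable hr.le (hinvcont.smul continuousOn_const)
  have hconst : (∮ z in C(μ, r), (z - μ)⁻¹ • (1 : H →L[ℂ] H))
      = (2 * Real.pi * Complex.I) • (1 : H →L[ℂ] H) := by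
    rw [circleIntegral.integral_smul_const,
      circleIntegral.integral_sub_inv_of_mem_ball (mem_ball_self hr)]
  have h2pi : (2 * Real.pi * Complex.I : ℂ) ≠ 0 := by
    simp [Real.pi_ne_zero, Complex.I_ne_zero, Complex.ofReal_ne_zero]
  refine ⟨-(c • ∮ z in C(μ, r), (z - μ)⁻¹ • f z), ?_⟩
  have hfinal : (μ • (1 : H →L[ℂ] H) - T) * (c • ∮ z in C(μ, r), (z - μ)⁻¹ • f z)
      = 1 - E := by
    rw [mul_smul_comm, hmix, circleIntegral.integral_congr hr.le heq2,
      circleIntegral.integral_sub hint1 hfc, hconst]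
    rw [smul_sub, smul_smul]
    have hc1 : c * (2 * Real.pi * Complex.I) = 1 := by
      rw [hc]; exact inv_mul_cancel₀ h2pi
    rw [hc1, one_smul]
    rw [hE]
  calc (1 : H →L[ℂ] H) - E
      = (μ • (1 : H →L[ℂ] H) - T) * (c • ∮ z in C(μ, r), (z - μ)⁻¹ • f z) := hfinal.symm
    _ = S * -(c • ∮ z in C(μ, r), (z - μ)⁻¹ • f z) := by
        rw [hS, mul_neg, ← neg_mul]
        congr 1
        abel


end Stmt13Aux2

theorem stmt_13 {H : Type*} [NormedAddCommGroup H] [InnerProductSpace ℂ H]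
    [CompleteSpace H] (T : H →L[ℂ] H)
    (hT : ∀ (lam : ℂ) (x : H),
      ‖(T - lam • 1) x‖ ^ 2 ≤ ‖((T - lam • 1) ∘L (T - lam • 1)) x‖ * ‖x‖)
    (μ : ℂ) (hμ : μ ∈ spectrum ℂ T) (hμ0 : μ ≠ 0)
    (r : ℝ) (hr : 0 < r)
    (hsep : Metric.closedBall μ r ∩ spectrum ℂ T = {μ})
    (E : H →L[ℂ] H)
    (hE : E = ((2 * Real.pi * Complex.I)⁻¹ : ℂ) •
      (∮ z in C(μ, r), Ring.inverse (z • (1 : H →L[ℂ] H) - T))) :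
    LinearMap.ker ((T - μ • (1 : H →L[ℂ] H) : H →L[ℂ] H) : H →ₗ[ℂ] H) =
      LinearMap.ker ((ContinuousLinearMap.adjoint T - (starRingEnd ℂ) μ • (1 : H →L[ℂ] H) : H →L[ℂ] H) : H →ₗ[ℂ] H) ∧
    IsSelfAdjoint E := by
  have hsp : ∀ z, z ∈ closedBall μ r → z ∈ spectrum ℂ T → z = μ := by
    intro z h1 h2
    have hz : z ∈ ({μ} : Set ℂ) := by rw [← hsep]; exact ⟨h1, h2⟩
    simpa using hz
  have hpara : ∀ v : H, ‖(T - μ • 1) v‖ ^ 2 ≤ ‖(T - μ • 1) ((T - μ • 1) v)‖ * ‖v‖ := by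
    intro v
    have h := hT μ v
    rwa [ContinuousLinearMap.comp_apply] at h
  obtain ⟨hSE, Q, hQ⟩ := riesz_facts T μ r hr hsp hpara E hE
  set S : H →L[ℂ] H := T - μ • 1 with hS
  have hp : ∀ (ν : ℂ) (z : H),
      ‖(S + ν • 1) z‖ ^ 2 ≤ ‖(S + ν • 1) ((S + ν • 1) z)‖ * ‖z‖ := by
    intro ν z
    have h1 := hT (μ - ν) z
    have h2 : T - (μ - ν) • 1 = S + ν • 1 := by rw [hS, sub_smul]; abel
    rw [h2] at h1
    rwa [ContinuousLinearMap.comp_apply] at h1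
  -- basic consequences of the Riesz facts
  have hEker : ∀ w : H, S (E w) = 0 := by
    intro w
    have h1 : (S * E) w = (0 : H →L[ℂ] H) w := by rw [hSE]
    simpa [ContinuousLinearMap.mul_apply] using h1
  have hranS : ∀ w : H, w - E w = S (Q w) := by
    intro w
    have h1 : ((1 : H →L[ℂ] H) - E) w = (S * Q) w := by rw [hQ]
    simpa [ContinuousLinearMap.sub_apply, ContinuousLinearMap.mul_apply] using h1
  -- x ∈ ker S is orthogonal to the range of S
  have horth : ∀ x : H, S x = 0 → ∀ w : H, (inner ℂ x (S w) : ℂ) = 0 := by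
    intro x hx w
    rcases eq_or_ne x 0 with rfl | hx0
    · exact inner_zero_left _
    have hsw : S w = S (S (Q w)) := by
      have h1 : S w = S (w - E w) + S (E w) := by
        rw [← map_add]
        congr 1
        abel
      rw [h1, hEker w, add_zero, hranS w]
    rw [hsw]
    set y0 : H := Q w with hy0
    set c0 : ℂ := (inner ℂ x y0 : ℂ) / ((‖x‖ : ℂ) ^ 2) with hc0
    set y1 : H := y0 - c0 • x with hy1
    have hnz : ((‖x‖ : ℂ)) ^ 2 ≠ 0 := by
      have : ‖x‖ ≠ 0 := norm_ne_zero_iff.mpr hx0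
      simpa using this
    have hxy1 : (inner ℂ x y1 : ℂ) = 0 := by
      rw [hy1, inner_sub_right, inner_smul_right, inner_self_eq_norm_sq_to_K, hc0]
      field_simp
      simp [hx0]
    have hSy1 : S y1 = S y0 := by
      rw [hy1, map_sub, map_smul, hx, smul_zero, sub_zero]
    have := lemC S hp x y1 hx hxy1
    rwa [hSy1] at this
  -- ker S ⊆ ker (adjoint S)
  have hSadj : ContinuousLinearMap.adjoint T - (starRingEnd ℂ) μ • 1
      = ContinuousLinearMap.adjoint S := by
    rw [← ContinuousLinearMap.star_eq_adjoint, ← ContinuousLinearMap.star_eq_adjoint, hS,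
      star_sub, star_smul, star_one]
    rfl
  have hadj : ∀ x : H, S x = 0 → ContinuousLinearMap.adjoint S x = 0 := by
    intro x hx
    apply ext_inner_right ℂ
    intro v
    rw [ContinuousLinearMap.adjoint_inner_left, horth x hx v, inner_zero_left]
  constructor
  · ext x
    simp only [LinearMap.mem_ker, ContinuousLinearMap.coe_coe]
    constructor
    · intro hx
      rw [hSadj]
      exact hadj x hx
    · intro hx
      rw [hSadj] at hx
      have hxort : ∀ v : H, (inner ℂ x (S v) : ℂ) = 0 := by
        intro v
        rw [← ContinuousLinearMap.adjoint_inner_left, hx, inner_zero_left]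
      have hu : x - E x = S (Q x) := hranS x
      have h1 : (inner ℂ x (x - E x) : ℂ) = 0 := by rw [hu]; exact hxort (Q x)
      have h2 : (inner ℂ (E x) (x - E x) : ℂ) = 0 := by
        rw [hu, ← ContinuousLinearMap.adjoint_inner_left, hadj (E x) (hEker x),
          inner_zero_left]
      have h3 : (inner ℂ (x - E x) (x - E x) : ℂ) = 0 := by
        rw [inner_sub_left, h1, h2, sub_zero]
      have h4 : x - E x = 0 := inner_self_eq_zero.mp h3
      have h5 : x = E x := by rwa [sub_eq_zero] at h4
      show S x = 0
      rw [h5]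
      exact hEker x
  · rw [ContinuousLinearMap.isSelfAdjoint_iff_isSymmetric]
    intro u v
    simp only [ContinuousLinearMap.coe_coe]
    have hv : v = E v + (v - E v) := by abel
    have hu : u = E u + (u - E u) := by abel
    have h1 : (inner ℂ (E u) v : ℂ) = inner ℂ (E u) (E v) := by
      conv_lhs => rw [hv]
      rw [inner_add_right]
      have : (inner ℂ (E u) (v - E v) : ℂ) = 0 := by
        rw [hranS v]
        exact horth (E u) (hEker u) (Q v)
      rw [this, add_zero]
    have h2 : (inner ℂ u (E v) : ℂ) = inner ℂ (E u) (E v) := by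
      conv_lhs => rw [hu]
      rw [inner_add_left]
      have : (inner ℂ (u - E u) (E v) : ℂ) = 0 := by
        rw [← inner_conj_symm]
        rw [hranS u]
        rw [horth (E v) (hEker v) (Q u)]
        exact map_zero _
      rw [this, add_zero]
    rw [h1, h2]
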